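/- Let m ∈ ℕ and λ₀, …, λ_m ∈ ℂ; define gᵢ(r) := Σ_{j=i}^{m} (λⱼ/(j−i+1))·C(j, j−i)·r^{j−i+1} for 0 ≤ i ≤ m, and let σ be the action of (ℂ², +) on ℂ² given by (t₁,t₂)·_σ(x,y) = (x + Σ_{i=0}^{m} gᵢ(t₁)·yⁱ + t₂ , y + t₁). Let τ be the action given by (s₁,s₂)·_τ(x,y) = (x + λ·Σ_{i=0}^{m} (1/(m−i+1))·C(m, m−i)·s₁^{m−i+1}·yⁱ + s₂ , y + s₁), where λ := a·λ_m. Then for every a ∈ ℂ with a ≠ 0 and every e ∈ ℂ, there exist a polynomial h ∈ ℂ[y] of degree at most m and an additive group automorphism φ of (ℂ², +) such that, setting F(x,y) := (a·x + h(y), y + e), one has F((t₁,t₂)·_σ(x,y)) = φ(t₁,t₂)·_τ F(x,y) for all (t₁,t₂) ∈ ℂ² and (x,y) ∈ ℂ². In particular, every action of the above form σ is equivalent to τ_{λ_m}. -/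
import Mathlib

open Finset

/-- `gfun m l i r = ∑_{j=i}^{m} (l j/(j-i+1)) * C(j, j-i) * r^(j-i+1)`. -/
noncomputable def gfun (m : ℕ) (l : ℕ → ℂ) (i : ℕ) (r : ℂ) : ℂ :=
  ∑ j ∈ Finset.Icc i m, (l j / ((j - i + 1 : ℕ) : ℂ)) * ((j.choose (j - i) : ℕ) : ℂ) * r ^ (j - i + 1)

/-- The action `σ : (t₁,t₂)·(x,y) = (x + Σᵢ gᵢ(t₁) yⁱ + t₂ , y + t₁)`. -/
noncomputable def sigmaAct (m : ℕ) (l : ℕ → ℂ) (t z : ℂ × ℂ) : ℂ × ℂ :=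
  (z.1 + ∑ i ∈ Finset.range (m + 1), gfun m l i t.1 * z.2 ^ i + t.2, z.2 + t.1)

/-- The action `τ_λ : (s₁,s₂)·(x,y) =
`(x + λ Σᵢ (1/(m-i+1)) C(m, m-i) s₁^(m-i+1) yⁱ + s₂ , y + s₁)`. -/
noncomputable def tauAct (m : ℕ) (lam : ℂ) (s z : ℂ × ℂ) : ℂ × ℂ :=
  (z.1 + lam * ∑ i ∈ Finset.range (m + 1),
      (1 / ((m - i + 1 : ℕ) : ℂ)) * ((m.choose (m - i) : ℕ) : ℂ) * s.1 ^ (m - i + 1) * z.2 ^ i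
    + s.2,
   z.2 + s.1)

lemma binom_diff (n : ℕ) (r y : ℂ) :
    ∑ k ∈ Finset.range (n+1), (((n+1).choose k : ℕ) : ℂ) * r ^ (n+1-k) * y ^ k
      = (y + r) ^ (n+1) - y ^ (n+1) := by
  have h : ∑ k ∈ Finset.range (n+1), (((n+1).choose k : ℕ) : ℂ) * r ^ (n+1-k) * y ^ k
      = ∑ k ∈ Finset.range (n+1), y ^ k * r ^ (n+1-k) * (((n+1).choose k : ℕ) : ℂ) :=
    Finset.sum_congr rfl fun k _ => by ring
  rw [h, add_pow]
  conv_rhs => rw [Finset.sum_range_succ]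
  simp

lemma keylem (n : ℕ) (r y : ℂ) :
    ∑ i ∈ Finset.range (n+1),
        (1 / ((n - i + 1 : ℕ) : ℂ)) * ((n.choose (n - i) : ℕ) : ℂ) * r ^ (n - i + 1) * y ^ i
      = (1 / ((n + 1 : ℕ) : ℂ)) * ((y + r) ^ (n+1) - y ^ (n+1)) := by
  rw [← binom_diff n r y, Finset.mul_sum]
  refine Finset.sum_congr rfl fun i hi => ?_
  rw [Finset.mem_range] at hi
  have hi' : i ≤ n := by omega
  have h2 : n + 1 - i = n - i + 1 := by omega
  have h3 : (n + 1) * n.choose (n - i) = (n - i + 1) * (n+1).choose i := by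
    rw [Nat.choose_symm hi', Nat.mul_comm (n+1), Nat.choose_mul_succ_eq, h2]
    exact Nat.mul_comm _ _
  have c1 : ((n - i + 1 : ℕ) : ℂ) ≠ 0 := Nat.cast_ne_zero.mpr (by omega)
  have c2 : ((n + 1 : ℕ) : ℂ) ≠ 0 := Nat.cast_ne_zero.mpr (by omega)
  have h3' : ((n + 1 : ℕ) : ℂ) * ((n.choose (n - i) : ℕ) : ℂ)
      = ((n - i + 1 : ℕ) : ℂ) * (((n+1).choose i : ℕ) : ℂ) := by exact_mod_cast h3
  have hcoef : (1 / ((n - i + 1 : ℕ) : ℂ)) * ((n.choose (n - i) : ℕ) : ℂ)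
      = (1 / ((n + 1 : ℕ) : ℂ)) * (((n+1).choose i : ℕ) : ℂ) := by
    rw [div_mul_eq_mul_div, div_mul_eq_mul_div, div_eq_div_iff c1 c2]
    linear_combination h3'
  rw [h2]
  linear_combination r ^ (n - i + 1) * y ^ i * hcoef

lemma sigma_sum (m : ℕ) (l : ℕ → ℂ) (r y : ℂ) :
    ∑ i ∈ Finset.range (m+1), gfun m l i r * y ^ i
      = ∑ j ∈ Finset.range (m+1),
          l j * ((1 / ((j + 1 : ℕ) : ℂ)) * ((y + r) ^ (j+1) - y ^ (j+1))) := by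
  unfold gfun
  simp_rw [Finset.sum_mul]
  rw [Finset.sum_comm' (t' := Finset.range (m+1)) (s' := fun j => Finset.range (j+1))
    (fun i j => by simp only [Finset.mem_range, Finset.mem_Icc]; omega)]
  refine Finset.sum_congr rfl fun j hj => ?_
  rw [← keylem j r y, Finset.mul_sum]
  exact Finset.sum_congr rfl fun i hi => by ring

noncomputable def hpoly (m : ℕ) (l : ℕ → ℂ) (a e : ℂ) : Polynomial ℂ :=
  (∑ k ∈ Finset.range (m+1),
     Polynomial.C (a * l m / ((m+1:ℕ):ℂ) * (((m+1).choose k : ℕ):ℂ) * e^(m+1-k)) * Polynomial.X ^ k)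
  - ∑ j ∈ Finset.range m, Polynomial.C (a * l j / ((j+1:ℕ):ℂ)) * Polynomial.X ^ (j+1)

lemma hpoly_degree (m : ℕ) (l : ℕ → ℂ) (a e : ℂ) :
    (hpoly m l a e).degree ≤ (m : WithBot ℕ) := by
  unfold hpoly
  refine le_trans (Polynomial.degree_sub_le _ _) (max_le ?_ ?_)
  · refine le_trans (Polynomial.degree_sum_le _ _) (Finset.sup_le fun k hk => ?_)
    refine le_trans (Polynomial.degree_C_mul_X_pow_le _ _) ?_
    have : k ≤ m := by simpa [Nat.lt_succ_iff] using hk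
    exact_mod_cast this
  · refine le_trans (Polynomial.degree_sum_le _ _) (Finset.sup_le fun j hj => ?_)
    refine le_trans (Polynomial.degree_C_mul_X_pow_le _ _) ?_
    have : j + 1 ≤ m := by simpa [Nat.succ_le_iff] using hj
    exact_mod_cast this

lemma hpoly_eval (m : ℕ) (l : ℕ → ℂ) (a e y : ℂ) :
    (hpoly m l a e).eval y
      = a * l m / ((m+1:ℕ):ℂ) * ((y + e) ^ (m+1) - y ^ (m+1))
        - ∑ j ∈ Finset.range m, a * l j / ((j+1:ℕ):ℂ) * y ^ (j+1) := by
  unfold hpoly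
  rw [Polynomial.eval_sub, Polynomial.eval_finset_sum, Polynomial.eval_finset_sum]
  rw [← binom_diff m e y, Finset.mul_sum]
  congr 1
  · exact Finset.sum_congr rfl fun k _ => by simp; ring
  · exact Finset.sum_congr rfl fun j _ => by simp

lemma main_id (m : ℕ) (l : ℕ → ℂ) (a e t y : ℂ) :
    a * (∑ i ∈ Finset.range (m+1), gfun m l i t * y ^ i)
      + (hpoly m l a e).eval (y + t) - (hpoly m l a e).eval y
    = (a * l m) * ((1 / ((m + 1 : ℕ) : ℂ)) * ((y + e + t) ^ (m+1) - (y + e) ^ (m+1))) := by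
  rw [sigma_sum, Finset.mul_sum, Finset.sum_range_succ, hpoly_eval, hpoly_eval]
  have h12 : ∑ j ∈ Finset.range m, a * (l j * ((1 / ((j + 1 : ℕ) : ℂ)) * ((y + t) ^ (j+1) - y ^ (j+1))))
      = (∑ j ∈ Finset.range m, a * l j / ((j+1:ℕ):ℂ) * (y + t) ^ (j+1))
        - ∑ j ∈ Finset.range m, a * l j / ((j+1:ℕ):ℂ) * y ^ (j+1) := by
    rw [← Finset.sum_sub_distrib]
    exact Finset.sum_congr rfl fun j _ => by ring
  rw [h12]
  ring

/-- for every `a ≠ 0` and `e ∈ ℂ` there are a polynomial `h` of degree at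
most `m` and an additive automorphism `φ` of `(ℂ²,+)` such that, with
`F(x,y) := (a·x + h(y), y + e)`, one has `F(σ(t,z)) = τ_{a·λ_m}(φ(t), F(z))`.
In particular, `σ` is equivalent to `τ_{λ_m}`. -/
theorem sigma_equivalent_tau (m : ℕ) (l : ℕ → ℂ) :
    (∀ a : ℂ, a ≠ 0 → ∀ e : ℂ,
      ∃ (h : Polynomial ℂ) (φ : (ℂ × ℂ) ≃+ ℂ × ℂ),
        h.degree ≤ (m : WithBot ℕ) ∧
        ∀ t z : ℂ × ℂ,
          (a * (sigmaAct m l t z).1 + h.eval (sigmaAct m l t z).2, (sigmaAct m l t z).2 + e) =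
            tauAct m (a * l m) (φ t) (a * z.1 + h.eval z.2, z.2 + e)) ∧
    (∃ (F : (ℂ × ℂ) ≃ ℂ × ℂ) (φ : (ℂ × ℂ) ≃+ ℂ × ℂ),
      ∀ t z : ℂ × ℂ, F (sigmaAct m l t z) = tauAct m (l m) (φ t) (F z)) := by
  have hmain : ∀ a : ℂ, a ≠ 0 → ∀ e : ℂ,
      ∃ (h : Polynomial ℂ) (φ : (ℂ × ℂ) ≃+ ℂ × ℂ),
        h.degree ≤ (m : WithBot ℕ) ∧
        ∀ t z : ℂ × ℂ,
          (a * (sigmaAct m l t z).1 + h.eval (sigmaAct m l t z).2, (sigmaAct m l t z).2 + e) =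
            tauAct m (a * l m) (φ t) (a * z.1 + h.eval z.2, z.2 + e) := by
    intro a ha e
    refine ⟨hpoly m l a e,
      { toFun := fun t => (t.1, a * t.2)
        invFun := fun s => (s.1, a⁻¹ * s.2)
        left_inv := fun t => by
          simp [inv_mul_cancel_left₀ ha]
        right_inv := fun s => by
          simp [mul_inv_cancel_left₀ ha]
        map_add' := fun s t => by
          simp [Prod.ext_iff]; ring },
      hpoly_degree m l a e, ?_⟩
    rintro ⟨t₁, t₂⟩ ⟨x, y⟩
    simp only [sigmaAct, tauAct, AddEquiv.coe_mk, Equiv.coe_fn_mk, Prod.mk.injEq]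
    constructor
    · rw [keylem m t₁ (y + e)]
      linear_combination main_id m l a e t₁ y
    · ring
  refine ⟨hmain, ?_⟩
  obtain ⟨h, φ, _, heq⟩ := hmain 1 one_ne_zero 0
  refine ⟨{ toFun := fun z => (z.1 + h.eval z.2, z.2)
            invFun := fun z => (z.1 - h.eval z.2, z.2)
            left_inv := fun z => by simp
            right_inv := fun z => by simp }, φ, ?_⟩
  intro t z
  have := heq t z
  simpa using this
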